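/- For all real numbers y > x > 0, x·ψ₁(x) − 2y·ψ₁(y) − y²·ψ₂(y) > 0, where ψ₁ and ψ₂ are the polygamma functions of orders one and two. -/
import Mathlib

noncomputable def trigamma (x : ℝ) : ℝ := ∑' v : ℕ, 1 / (x + v) ^ 2

noncomputable def tetragamma (x : ℝ) : ℝ := -2 * ∑' v : ℕ, 1 / (x + v) ^ 3

lemma summable_aux (x : ℝ) (hx : 0 < x) (p : ℕ) (hp : 1 < p) :
    Summable (fun v : ℕ => 1 / (x + v) ^ p) := by
  set C : ℝ := max (1 / x ^ p) (2 ^ p) with hC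
  have hsum : Summable (fun v : ℕ => C * (1 / ((v : ℝ) + 1) ^ p)) := by
    have h1 : Summable (fun v : ℕ => 1 / (((v + 1 : ℕ) : ℝ)) ^ p) :=
      (summable_nat_add_iff 1).mpr (Real.summable_one_div_nat_pow.mpr hp)
    exact (h1.congr (fun v => by push_cast; ring)).mul_left C
  refine Summable.of_nonneg_of_le (fun v => by positivity) (fun v => ?_) hsum
  rcases Nat.eq_zero_or_pos v with h0 | h1
  · subst h0
    simp only [Nat.cast_zero, add_zero, zero_add, one_pow, div_one, mul_one]
    exact le_max_left _ _
  · have hv1 : (1 : ℝ) ≤ v := by exact_mod_cast h1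
    have hxv : 0 < x + v := by linarith
    have key : 1 / (x + v) ≤ 2 / ((v : ℝ) + 1) := by
      rw [div_le_div_iff₀ hxv (by linarith)]
      linarith
    have hpow : (1 / (x + v)) ^ p ≤ (2 / ((v : ℝ) + 1)) ^ p :=
      pow_le_pow_left₀ (by positivity) key p
    have h2 : 1 / (x + v) ^ p ≤ 2 ^ p / ((v : ℝ) + 1) ^ p := by
      rw [div_pow, div_pow, one_pow] at hpow
      exact hpow
    calc 1 / (x + v) ^ p ≤ 2 ^ p / ((v : ℝ) + 1) ^ p := h2
      _ = 2 ^ p * (1 / ((v : ℝ) + 1) ^ p) := by ring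
      _ ≤ C * (1 / ((v : ℝ) + 1) ^ p) := by
          have : (0:ℝ) ≤ 1 / ((v : ℝ) + 1) ^ p := by positivity
          exact mul_le_mul_of_nonneg_right (le_max_right _ _) this

lemma lemA (x : ℝ) (hx : 0 < x) : 1 < x * ∑' v : ℕ, 1 / (x + v) ^ 2 := by
  have htel : HasSum (fun v : ℕ => 1 / (x + v) - 1 / (x + v + 1)) (1 / x) := by
    have hnn : ∀ v : ℕ, 0 ≤ 1 / (x + (v:ℝ)) - 1 / (x + v + 1) := by
      intro v
      have h1 : (0:ℝ) < x + v := by positivity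
      have h2 : (0:ℝ) < x + v + 1 := by linarith
      have : 1 / (x + (v:ℝ) + 1) ≤ 1 / (x + v) :=
        one_div_le_one_div_of_le h1 (by linarith)
      linarith
    rw [hasSum_iff_tendsto_nat_of_nonneg hnn]
    have heq : ∀ n : ℕ, ∑ i ∈ Finset.range n, (1 / (x + (i:ℝ)) - 1 / (x + i + 1))
        = 1 / x - 1 / (x + n) := by
      intro n
      have := Finset.sum_range_sub' (fun i : ℕ => 1 / (x + (i:ℝ))) n
      simp only [Nat.cast_zero, add_zero] at this
      rw [← this]
      refine Finset.sum_congr rfl fun i _ => ?_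
      push_cast
      ring_nf
    simp only [heq]
    have hlim : Filter.Tendsto (fun n : ℕ => 1 / (x + n)) Filter.atTop (nhds 0) := by
      apply Filter.Tendsto.div_atTop tendsto_const_nhds
      exact Filter.tendsto_atTop_add_const_left _ x tendsto_natCast_atTop_atTop
    have := (tendsto_const_nhds (x := (1/x : ℝ)) (f := Filter.atTop (α := ℕ))).sub hlim
    simpa using this
  have hS2 : Summable (fun v : ℕ => 1 / (x + v) ^ 2) := summable_aux x hx 2 one_lt_two
  have hlt : 1 / x < ∑' v : ℕ, 1 / (x + v) ^ 2 := by
    rw [← htel.tsum_eq]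
    refine Summable.tsum_lt_tsum_of_nonneg (i := 0) ?_ ?_ ?_ hS2
    · intro v
      have h1 : (0:ℝ) < x + v := by positivity
      have h2 : (0:ℝ) < x + v + 1 := by linarith
      have : 1 / (x + (v:ℝ) + 1) ≤ 1 / (x + v) := one_div_le_one_div_of_le h1 (by linarith)
      linarith
    · intro v
      have h1 : (0:ℝ) < x + v := by positivity
      have h2 : (0:ℝ) < x + v + 1 := by linarith
      rw [div_sub_div _ _ (ne_of_gt h1) (ne_of_gt h2), div_le_div_iff₀ (by positivity) (by positivity)]
      nlinarith
    · have h1 : (0:ℝ) < x := hx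
      simp only [Nat.cast_zero, add_zero]
      rw [div_sub_div _ _ (ne_of_gt h1) (by positivity : (x + 1) ≠ 0),
        div_lt_div_iff₀ (by positivity) (by positivity)]
      nlinarith
  calc 1 = x * (1 / x) := by field_simp
    _ < x * ∑' v : ℕ, 1 / (x + v) ^ 2 := by
        exact (mul_lt_mul_iff_right₀ hx).mpr hlt

noncomputable def dSeq (y : ℝ) : ℕ → ℝ
  | 0 => 1 / (2 * y)
  | (j+1) => (y + 2 * j + 1) / (2 * (y + j) * (y + j + 1))

lemma lemB (y : ℝ) (hy : 0 < y) :
    (∑' v : ℕ, (v : ℝ) / (y + v) ^ 3) ≤ 1 / (2 * y) := by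
  have hdnn : ∀ n, 0 ≤ dSeq y n := by
    intro n
    match n with
    | 0 =>
      simp only [dSeq]
      positivity
    | (j+1) =>
      simp only [dSeq]
      positivity
  have hstep : ∀ i : ℕ, (i : ℝ) / (y + i) ^ 3 ≤ dSeq y i - dSeq y (i + 1) := by
    intro i
    match i with
    | 0 =>
      simp only [dSeq]
      push_cast
      have h : (y + 2 * (0:ℝ) + 1) / (2 * (y + 0) * (y + 0 + 1)) = 1 / (2 * y) := by
        field_simp
        ring
      rw [h]
      simp
    | (j+1) =>
      simp only [dSeq]
      push_cast
      have h0 : (0:ℝ) < y + j := by positivity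
      have h1 : (0:ℝ) < y + j + 1 := by linarith
      have h2 : (0:ℝ) < y + j + 2 := by linarith
      have key : (y + 2 * (j:ℝ) + 1) / (2 * (y + j) * (y + j + 1)) -
          (y + 2 * ((j:ℝ)+1) + 1) / (2 * (y + ((j:ℝ)+1)) * (y + ((j:ℝ)+1) + 1)) =
          ((j:ℝ) + 1) / ((y + j) * (y + j + 1) * (y + j + 2)) := by
        field_simp
        ring
      rw [key]
      rw [div_le_div_iff₀ (by positivity) (by positivity)]
      nlinarith [Nat.cast_nonneg (α := ℝ) j, mul_pos h0 h1]
  apply Real.tsum_le_of_sum_range_le (fun n => by positivity)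
  intro n
  calc ∑ i ∈ Finset.range n, (i : ℝ) / (y + i) ^ 3
      ≤ ∑ i ∈ Finset.range n, (dSeq y i - dSeq y (i + 1)) :=
        Finset.sum_le_sum fun i _ => hstep i
    _ = dSeq y 0 - dSeq y n := Finset.sum_range_sub' (dSeq y) n
    _ ≤ dSeq y 0 := by linarith [hdnn n]
    _ = 1 / (2 * y) := by simp [dSeq]

theorem stmt_9 : ∀ x y : ℝ, 0 < x → x < y →
    x * trigamma x - 2 * y * trigamma y - y ^ 2 * tetragamma y > 0 := by
  intro x y hx hxy
  have hy : 0 < y := hx.trans hxy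
  have hS2 : Summable (fun v : ℕ => 1 / (y + v) ^ 2) := summable_aux y hy 2 one_lt_two
  have hS3 : Summable (fun v : ℕ => 1 / (y + v) ^ 3) := summable_aux y hy 3 (by norm_num)
  have hsplit : (∑' v : ℕ, (v : ℝ) / (y + v) ^ 3)
      = (∑' v : ℕ, 1 / (y + v) ^ 2) - y * ∑' v : ℕ, 1 / (y + v) ^ 3 := by
    rw [← tsum_mul_left, ← Summable.tsum_sub hS2 (hS3.mul_left y)]
    refine tsum_congr fun v => ?_
    have h1 : (0:ℝ) < y + v := by positivity
    field_simp
    ring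
  have hA : 1 < x * trigamma x := lemA x hx
  have hB : (∑' v : ℕ, (v : ℝ) / (y + v) ^ 3) ≤ 1 / (2 * y) := lemB y hy
  have hB' : 2 * y * ((∑' v : ℕ, 1 / (y + v) ^ 2) - y * ∑' v : ℕ, 1 / (y + v) ^ 3) ≤ 1 := by
    rw [← hsplit]
    calc 2 * y * (∑' v : ℕ, (v : ℝ) / (y + v) ^ 3) ≤ 2 * y * (1 / (2 * y)) := by
          exact mul_le_mul_of_nonneg_left hB (by positivity)
      _ = 1 := by field_simp
  unfold trigamma tetragamma at *
  nlinarith [hA, hB']
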